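/- Let κ be an uncountable regular cardinal and let c be a function from the 2-element subsets of κ to 2. Then there exists an injection ι from κ into the binary sequences of length < κ, with ι(β) of length β+1 for every β < κ, such that: if there exists x : κ → 2 for which the set {α < κ : there is β < κ with x↾α ⊆ ι(β)} is unbounded in κ, then there exists a c-homogeneous subset of κ that is unbounded in κ. -/

import Mathlib

/-- A binary sequence, coded as a pair consisting of its length and its values
(values at or beyond the length are irrelevant junk, normalized to `0` by
`IsBSeq`). -/
abbrev BSeq : Type _ := Ordinal × (Ordinal → Fin 2)

/-- The length of a binary sequence. -/
def bLen (t : BSeq) : Ordinal := t.1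

/-- The values of a binary sequence. -/
def bVal (t : BSeq) : Ordinal → Fin 2 := t.2

/-- A pair codes a genuine binary sequence: all values at or beyond the length
are `0`. -/
def IsBSeq (t : BSeq) : Prop := ∀ β, bLen t ≤ β → bVal t β = 0

/-- `BExt t u` means `t ⊆ u`: the binary sequence `u` extends `t`. -/
def BExt (t u : BSeq) : Prop := bLen t ≤ bLen u ∧ ∀ β < bLen t, bVal u β = bVal t β

/-- `BExtFun t x` means `t ⊆ x`: the total function `x` extends the binary
sequence `t`. -/
def BExtFun (t : BSeq) (x : Ordinal → Fin 2) : Prop := ∀ β < bLen t, x β = bVal t β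

/-- `x↾γ`: the restriction of `x : κ → 2` to `γ`, as a binary sequence of
length `γ`. -/
noncomputable def bRestrict (x : Ordinal → Fin 2) (γ : Ordinal) : BSeq :=
  (γ, fun β => if β < γ then x β else 0)

/-- The lexicographic ordering on binary sequences. -/
def BLex (s t : BSeq) : Prop :=
  (BExt s t ∧ s ≠ t) ∨
    ∃ γ, γ < bLen s ∧ γ < bLen t ∧ (∀ β < γ, bVal s β = bVal t β) ∧ bVal s γ < bVal t γ

/-- Let `κ` be an uncountable regular cardinal and `c` a colouring
of the `2`-element subsets of `κ` with values in `2`.  Then there is an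
injection `ι` from `κ` into the binary sequences of length `< κ`, with `ι(β)`
of length `β + 1` for every `β < κ`, such that: if there is `x : κ → 2` for
which the set `{α < κ : ∃ β < κ, x↾α ⊆ ι(β)}` is unbounded in `κ`, then there
is a `c`-homogeneous subset of `κ` that is unbounded in `κ`. -/
theorem stmt6 (κ : Cardinal) (hreg : κ.IsRegular) (hunc : Cardinal.aleph0 < κ)
    (c : Finset Ordinal → Fin 2) :
    ∃ ι : Ordinal → BSeq,
      (∀ β < κ.ord, IsBSeq (ι β) ∧ bLen (ι β) = β + 1) ∧
      Set.InjOn ι (Set.Iio κ.ord) ∧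
      ((∃ x : Ordinal → Fin 2, ∀ γ < κ.ord, ∃ α, γ ≤ α ∧ α < κ.ord ∧
          ∃ β < κ.ord, BExt (bRestrict x α) (ι β)) →
        ∃ H : Set Ordinal, H ⊆ Set.Iio κ.ord ∧
          (∃ i : Fin 2, ∀ α ∈ H, ∀ β ∈ H, α < β → c {α, β} = i) ∧
          ∀ γ < κ.ord, ∃ α ∈ H, γ ≤ α) := by
  have hlim : Order.IsSuccLimit κ.ord := Cardinal.isSuccLimit_ord hreg.aleph0_le
  refine ⟨fun β => (β + 1, fun α => if α < β then c {α, β} else 0), ?_, ?_, ?_⟩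
  · intro β _
    refine ⟨fun δ hδ => ?_, rfl⟩
    simp only [bVal]
    simp only [bLen] at hδ
    rw [if_neg]
    intro hlt
    exact (le_self_add (a := β) (b := 1)).not_gt (lt_of_le_of_lt hδ hlt)
  · intro a _ b _ hab
    have : a + 1 = b + 1 := congrArg Prod.fst hab
    rwa [Ordinal.add_one_eq_succ, Ordinal.add_one_eq_succ, Order.succ_eq_succ_iff] at this
  · rintro ⟨x, hx⟩
    -- for every γ < κ.ord, find β ≥ γ with x δ = c {δ, β} for δ ≤ γ, δ < β
    have key : ∀ γ < κ.ord, ∃ β, γ ≤ β ∧ β < κ.ord ∧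
        ∀ δ, δ ≤ γ → δ < β → x δ = c {δ, β} := by
      intro γ hγ
      have hγ1 : γ + 1 < κ.ord := by
        rw [Ordinal.add_one_eq_succ]; exact hlim.succ_lt hγ
      obtain ⟨α, hγα, hα, β, hβ, hext⟩ := hx (γ + 1) hγ1
      obtain ⟨hlen, hval⟩ := hext
      have hαβ : α ≤ β + 1 := hlen
      have hγα' : γ < α := lt_of_lt_of_le
        (by rw [Ordinal.add_one_eq_succ]; exact Order.lt_succ γ) hγα
      have hγβ : γ ≤ β := by
        have : γ < β + 1 := lt_of_lt_of_le hγα' hαβ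
        rwa [Ordinal.add_one_eq_succ, Order.lt_succ_iff] at this
      refine ⟨β, hγβ, hβ, fun δ hδγ hδβ => ?_⟩
      have hδα : δ < α := lt_of_le_of_lt hδγ hγα'
      have := hval δ hδα
      simp only [bVal, bRestrict, bLen] at this
      rw [if_pos hδβ, if_pos hδα] at this
      exact this.symm
    choose! f hf1 hf2 hf3 using key
    -- the club of closure points of f
    set C : Set Ordinal := {γ | γ < κ.ord ∧ ∀ γ' < γ, f γ' < γ} with hC
    have hCunb : ∀ γ < κ.ord, ∃ ξ ∈ C, γ ≤ ξ := by
      intro γ hγ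
      -- iterate
      let g : ℕ → Ordinal := fun n => Nat.rec γ
        (fun _ p => max (p + 1) (Ordinal.blsub p (fun γ' _ => f γ'))) n
      have hglt : ∀ n, g n < κ.ord := by
        intro n
        induction n with
        | zero => exact hγ
        | succ n ih =>
          refine max_lt (by rw [Ordinal.add_one_eq_succ]; exact hlim.succ_lt ih) ?_
          exact Cardinal.blsub_lt_ord_of_isRegular hreg (Cardinal.lt_ord.mp ih)
            (fun i hi => hf2 i (hi.trans ih))
      have hgmono : ∀ m n, m ≤ n → g m ≤ g n := by
        intro m n hmn
        induction n with
        | zero => simp [Nat.le_zero.mp hmn]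
        | succ n ih =>
          rcases Nat.le_succ_iff.mp hmn with h | h
          · exact (ih h).trans ((le_max_left _ _).trans' (Order.le_succ (g n)))
          · exact h ▸ le_rfl
      refine ⟨⨆ n, g n, ⟨?_, ?_⟩, ?_⟩
      · exact Cardinal.iSup_lt_ord_lift_of_isRegular hreg
          (by simpa using hunc) hglt
      · intro γ' hγ'
        rw [Ordinal.lt_iSup_iff] at hγ'
        obtain ⟨n, hn⟩ := hγ'
        have : f γ' < g (n + 1) := by
          refine lt_of_lt_of_le (Ordinal.lt_blsub (fun γ'' _ => f γ'') γ' hn) ?_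
          exact le_max_right _ _
        exact lt_of_lt_of_le this (Ordinal.le_iSup g (n + 1))
      · exact Ordinal.le_iSup g 0
    -- homogeneity on f '' C, split by colour
    have hom : ∀ γ ∈ C, ∀ γ' ∈ C, γ < γ' → c {f γ, f γ'} = x (f γ) := by
      rintro γ ⟨hγκ, _⟩ γ' ⟨hγ'κ, hγ'cl⟩ hγγ'
      have h1 : f γ < γ' := hγ'cl γ hγγ'
      have h2 : γ' ≤ f γ' := hf1 γ' hγ'κ
      exact (hf3 γ' hγ'κ (f γ) h1.le (h1.trans_le h2)).symm
    -- one of the colour classes is unbounded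
    by_contra hcon
    push_neg at hcon
    have hbnd : ∀ i : Fin 2, ∃ γ < κ.ord, ∀ α ∈ {β | (∃ γ ∈ C, β = f γ) ∧ x β = i}, α < γ := by
      intro i
      obtain ⟨γ, hγ1, hγ2⟩ := hcon {β | (∃ γ ∈ C, β = f γ) ∧ x β = i}
        (by rintro β ⟨⟨γ, hγC, rfl⟩, _⟩; exact hf2 γ hγC.1)
        ⟨i, by
          rintro α ⟨⟨γa, hγa, rfl⟩, hxa⟩ β ⟨⟨γb, hγb, rfl⟩, hxb⟩ hab
          have hne : γa ≠ γb := by rintro rfl; exact absurd hab (lt_irrefl _)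
          rcases hne.lt_or_gt with h | h
          · rw [hom γa hγa γb hγb h]; exact hxa
          · exact absurd (lt_of_lt_of_le (hγa.2 γb h) (hf1 γa hγa.1)) (not_lt.mpr hab.le)⟩
      exact ⟨γ, hγ1, hγ2⟩
    obtain ⟨γ0, hγ0, hb0⟩ := hbnd 0
    obtain ⟨γ1, hγ1, hb1⟩ := hbnd 1
    obtain ⟨ξ, hξC, hξge⟩ := hCunb (max γ0 γ1) (max_lt hγ0 hγ1)
    have hfξ : max γ0 γ1 ≤ f ξ := hξge.trans (hf1 ξ hξC.1)
    have hmem : f ξ ∈ {β | (∃ γ ∈ C, β = f γ) ∧ x β = x (f ξ)} := ⟨⟨ξ, hξC, rfl⟩, rfl⟩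
    have h01 : ∀ i : Fin 2, i = 0 ∨ i = 1 := by decide
    rcases h01 (x (f ξ)) with h | h
    · exact absurd (hb0 (f ξ) ⟨⟨ξ, hξC, rfl⟩, h⟩) (not_lt.mpr ((le_max_left _ _).trans hfξ))
    · exact absurd (hb1 (f ξ) ⟨⟨ξ, hξC, rfl⟩, h⟩) (not_lt.mpr ((le_max_right _ _).trans hfξ))
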